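/- arXiv:2503.05469 — 3 statements merged into one kernel-verified Lean document; each statement's English description precedes it below -/
import Mathlib

section
/- Let (Y_i)_{i=1}^d and a filtration (F_i)_{i=0}^d with Y_{i+1} measurable w.r.t. F_{i+1} be such that P(|Y_{i+1}| ≥ k | F_i) ≥ ε almost surely for each i. Then on an enlarged probability space there exist random subsets X_i ⊆ Y_i of cardinality |X_i| ∈ {0, k} such that |X_1|, ..., |X_d| are independent with P(|X_i| = k) = ε and P(|X_i| = 0) = 1 - ε. -/
open MeasureTheory ProbabilityTheory

/-- Decoupling lemma: if random finite sets `Y_1, …, Y_d` adapted to a filtration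
satisfy `P(|Y_{i+1}| ≥ k | F_i) ≥ ε` a.s., then on an enlarged probability space there
are random subsets `X_i ⊆ Y_i` with `|X_i| ∈ {0, k}`, the cardinalities
`|X_1|, …, |X_d|` independent, and `P(|X_i| = k) = ε`, `P(|X_i| = 0) = 1 - ε`. -/
theorem decoupling_lemma {Ω : Type u} {α : Type v} [m : MeasurableSpace Ω]
    (P : Measure Ω) [IsProbabilityMeasure P] (d k : ℕ) (hk : 0 < k)
    (ε : ℝ) (hε0 : 0 < ε) (hε1 : ε < 1)
    (F : ℕ → MeasurableSpace Ω) (hF : ∀ i, F i ≤ m) (hFmono : Monotone F)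
    (Y : ℕ → Ω → Finset α)
    (hYmeas : ∀ i, Measurable[F (i + 1)] fun ω => (Y (i + 1) ω).card)
    (hcond : ∀ i < d, ∀ᵐ ω ∂P,
      ε ≤ (P[({ω' | k ≤ (Y (i + 1) ω').card}).indicator (fun _ => (1 : ℝ)) | F i]) ω) :
    ∃ (Ω' : Type (max u v)) (_ : MeasurableSpace Ω') (P' : Measure Ω')
      (pr : Ω' → Ω) (X : ℕ → Ω' → Finset α),
      IsProbabilityMeasure P' ∧ MeasurePreserving pr P' P ∧
      (∀ i, 1 ≤ i → i ≤ d → ∀ ω, X i ω ⊆ Y i (pr ω) ∧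
        ((X i ω).card = 0 ∨ (X i ω).card = k)) ∧
      iIndepFun
        (fun (i : Fin d) ω => (X ((i : ℕ) + 1) ω).card) P' ∧
      (∀ i, 1 ≤ i → i ≤ d →
        P' {ω | (X i ω).card = k} = ENNReal.ofReal ε ∧
        P' {ω | (X i ω).card = 0} = ENNReal.ofReal (1 - ε)) := by
  classical
  -- basic events and conditional expectations
  set B : ℕ → Set Ω := fun i => {ω | k ≤ (Y (i + 1) ω).card} with hB_def
  have hBmeasF : ∀ i, MeasurableSet[F (i + 1)] (B i) := fun i =>
    hYmeas i measurableSet_Ici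
  have hBmeas : ∀ i, MeasurableSet (B i) := fun i => hF (i + 1) _ (hBmeasF i)
  set h : ℕ → Ω → ℝ := fun i => P[(B i).indicator (fun _ => (1 : ℝ)) | F i] with hh_def
  have hcond' : ∀ i < d, ∀ᵐ ω ∂P, ε ≤ h i ω := hcond
  -- acceptance probabilities
  set r : ℕ → Ω → ℝ := fun i ω => ε / max ε (h i ω) with hr_def
  have hmax_pos : ∀ i ω, 0 < max ε (h i ω) := fun i ω => lt_of_lt_of_le hε0 (le_max_left _ _)
  have hr_pos : ∀ i ω, 0 < r i ω := fun i ω => div_pos hε0 (hmax_pos i ω)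
  have hr_le1 : ∀ i ω, r i ω ≤ 1 := fun i ω =>
    (div_le_one (hmax_pos i ω)).2 (le_max_left _ _)
  have hr_meas : ∀ i, StronglyMeasurable[F i] (r i) := fun i =>
    Measurable.stronglyMeasurable
      (measurable_const.div (measurable_const.max stronglyMeasurable_condExp.measurable))
  set q : ℕ → Ω → ℝ := fun i ω => (B i).indicator (fun _ => (1 : ℝ)) ω * r i ω with hq_def
  have hq_nonneg : ∀ i ω, 0 ≤ q i ω := by
    intro i ω
    by_cases hω : ω ∈ B i <;>
      simp [hq_def, hω, Set.indicator_of_mem, Set.indicator_of_notMem, (hr_pos i ω).le]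
  have hq_le1 : ∀ i ω, q i ω ≤ 1 := by
    intro i ω
    by_cases hω : ω ∈ B i <;>
      simp [hq_def, hω, Set.indicator_of_mem, Set.indicator_of_notMem, hr_le1 i ω]
  have hq_meas : ∀ i, StronglyMeasurable[F (i + 1)] (q i) := fun i =>
    ((stronglyMeasurable_const.indicator (hBmeasF i)).mul
      ((hr_meas i).mono (hFmono (Nat.le_succ i))))
  have hq_measm : ∀ i, StronglyMeasurable[m] (q i) := fun i => (hq_meas i).mono (hF (i + 1))
  -- integrability of bounded measurable functions
  have hint : ∀ g : Ω → ℝ, StronglyMeasurable[m] g → (∀ ω, ‖g ω‖ ≤ 1) → Integrable g P := by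
    intro g hg hgb
    exact Integrable.mono' (integrable_const 1) hg.aestronglyMeasurable (ae_of_all _ hgb)
  -- key conditional expectation identity
  have key1 : ∀ j < d, ∀ f : Ω → ℝ, StronglyMeasurable[F j] f →
      (∀ ω, 0 ≤ f ω) → (∀ ω, f ω ≤ 1) →
      ∫ ω, q j ω * f ω ∂P = ε * ∫ ω, f ω ∂P := by
    intro j hj f hfm hf0 hf1
    haveI : SigmaFinite (P.trim (hF j)) := by infer_instance
    set g : Ω → ℝ := fun ω => r j ω * f ω with hg_def
    have hg_sm : StronglyMeasurable[F j] g := (hr_meas j).mul hfm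
    have hg_m : StronglyMeasurable[m] g := hg_sm.mono (hF j)
    have hg_bd : ∀ ω, ‖g ω‖ ≤ 1 := by
      intro ω
      rw [Real.norm_eq_abs, abs_of_nonneg (mul_nonneg (hr_pos j ω).le (hf0 ω))]
      exact mul_le_one₀ (hr_le1 j ω) (hf0 ω) (hf1 ω)
    have hind_m : StronglyMeasurable[m] ((B j).indicator (fun _ => (1 : ℝ))) :=
      stronglyMeasurable_const.indicator (hBmeas j)
    have hind_bd : ∀ ω, ‖(B j).indicator (fun _ => (1 : ℝ)) ω‖ ≤ 1 := by
      intro ω; by_cases hω : ω ∈ B j <;> simp [hω]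
    have h1 : Integrable ((B j).indicator (fun _ => (1 : ℝ))) P := hint _ hind_m hind_bd
    have h2 : Integrable (g * (B j).indicator (fun _ => (1 : ℝ))) P := by
      refine hint _ (hg_m.mul hind_m) ?_
      intro ω
      calc ‖g ω * (B j).indicator (fun _ => (1 : ℝ)) ω‖
          = ‖g ω‖ * ‖(B j).indicator (fun _ => (1 : ℝ)) ω‖ := norm_mul _ _
        _ ≤ 1 * 1 := mul_le_mul (hg_bd ω) (hind_bd ω) (norm_nonneg _) zero_le_one
        _ = 1 := one_mul 1
    have heq1 : (fun ω => q j ω * f ω) = g * (B j).indicator (fun _ => (1 : ℝ)) := by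
      funext ω
      simp only [hq_def, hg_def, Pi.mul_apply]
      ring
    rw [heq1]
    rw [← integral_condExp (hF j) (f := g * (B j).indicator (fun _ => (1 : ℝ)))]
    have hpull := condExp_mul_of_stronglyMeasurable_left (μ := P) (m := F j) hg_sm h2 h1
    rw [integral_congr_ae hpull]
    have hae : ∀ᵐ ω ∂P, (g * P[(B j).indicator (fun _ => (1 : ℝ))|F j]) ω = ε * f ω := by
      filter_upwards [hcond' j hj] with ω hω
      have hmax : max ε (h j ω) = h j ω := max_eq_right hω
      have hhne : h j ω ≠ 0 := ne_of_gt (lt_of_lt_of_le hε0 hω)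
      have : r j ω * h j ω = ε := by
        rw [hr_def]; simp only [hmax]
        field_simp
      calc (g * P[(B j).indicator (fun _ => (1 : ℝ))|F j]) ω
          = r j ω * f ω * h j ω := rfl
        _ = (r j ω * h j ω) * f ω := by ring
        _ = ε * f ω := by rw [this]
    rw [integral_congr_ae hae, integral_const_mul]
  -- iterated identity
  have key2 : ∀ n, n ≤ d → ∀ S : Finset ℕ, (∀ i ∈ S, i < n) →
      ∫ ω, ∏ i ∈ S, q i ω ∂P = ε ^ S.card := by
    intro n
    induction n with
    | zero =>
      intro _ S hS
      have : S = ∅ := Finset.eq_empty_of_forall_notMem fun i hi => Nat.not_lt_zero i (hS i hi)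
      subst this
      simp
    | succ n ih =>
      intro hnd S hS
      by_cases hn : n ∈ S
      · have hS' : ∀ i ∈ S.erase n, i < n := by
          intro i hi
          exact lt_of_le_of_ne (Nat.lt_succ_iff.1 (hS i (Finset.mem_of_mem_erase hi)))
            (Finset.ne_of_mem_erase hi)
        set f : Ω → ℝ := fun ω => ∏ i ∈ S.erase n, q i ω with hf_def
        have hf_sm : StronglyMeasurable[F n] f :=
          Finset.stronglyMeasurable_fun_prod _ fun i hi =>
            (hq_meas i).mono (hFmono (Nat.succ_le_of_lt (hS' i hi)))
        have hf0 : ∀ ω, 0 ≤ f ω := fun ω =>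
          Finset.prod_nonneg fun i _ => hq_nonneg i ω
        have hf1 : ∀ ω, f ω ≤ 1 := fun ω =>
          Finset.prod_le_one (fun i _ => hq_nonneg i ω) (fun i _ => hq_le1 i ω)
        have hsplit : (fun ω => ∏ i ∈ S, q i ω) = fun ω => q n ω * f ω := by
          funext ω
          exact (Finset.mul_prod_erase S (fun i => q i ω) hn).symm
        rw [hsplit, key1 n (Nat.lt_of_succ_le hnd) f hf_sm hf0 hf1,
          ih (Nat.le_of_succ_le hnd) (S.erase n) hS']
        rw [← Finset.card_erase_add_one hn, pow_succ]
        ring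
      · exact ih (Nat.le_of_succ_le hnd) S fun i hi =>
          lt_of_le_of_ne (Nat.lt_succ_iff.1 (hS i hi)) (fun hin => hn (hin ▸ hi))
  -- the auxiliary probability space
  set ν0 : Measure ℝ := volume.restrict (Set.Icc 0 1) with hν0_def
  haveI : IsProbabilityMeasure ν0 := by
    constructor
    simp [hν0_def, Real.volume_Icc]
  set ν : Measure (Fin d → ℝ) := Measure.pi (fun _ => ν0) with hν_def
  haveI : IsProbabilityMeasure ν := by infer_instance
  set νu : Measure (ULift.{v} (Fin d → ℝ)) := ν.map ULift.up with hνu_def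
  haveI : IsProbabilityMeasure νu := Measure.isProbabilityMeasure_map measurable_up.aemeasurable
  set P' : Measure (Ω × ULift.{v} (Fin d → ℝ)) := P.prod νu with hP'_def
  haveI : IsProbabilityMeasure P' := by infer_instance
  -- the events
  set A : Fin d → Set (Ω × ULift.{v} (Fin d → ℝ)) :=
    fun i => {ω' | ω'.1 ∈ B i ∧ ω'.2.down i ≤ r i ω'.1} with hA_def
  have hA_meas : ∀ i, MeasurableSet (A i) := by
    intro i
    have h1 : MeasurableSet (Prod.fst ⁻¹' B i :
        Set (Ω × ULift.{v} (Fin d → ℝ))) := (hBmeas i).preimage measurable_fst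
    have hf1 : Measurable fun ω' : Ω × ULift.{v} (Fin d → ℝ) => ω'.2.down i :=
      (measurable_pi_apply i).comp (measurable_down.comp measurable_snd)
    have hf2 : Measurable fun ω' : Ω × ULift.{v} (Fin d → ℝ) => r i ω'.1 :=
      (((hr_meas i).mono (hF i)).measurable).comp measurable_fst
    exact h1.inter (measurableSet_le hf1 hf2)
  -- section measure of intersections
  have hν0Iic : ∀ c : ℝ, 0 < c → c ≤ 1 → ν0 (Set.Iic c) = ENNReal.ofReal c := by
    intro c hc0 hc1
    rw [hν0_def, Measure.restrict_apply measurableSet_Iic]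
    have : Set.Iic c ∩ Set.Icc 0 1 = Set.Icc 0 c := by
      ext x
      constructor
      · rintro ⟨hx1, hx2, _⟩; exact ⟨hx2, hx1⟩
      · rintro ⟨hx1, hx2⟩; exact ⟨hx2, hx1, hx2.trans hc1⟩
    rw [this, Real.volume_Icc]
    norm_num
  have key3 : ∀ S : Finset (Fin d), P' (⋂ i ∈ S, A i) = ENNReal.ofReal (ε ^ S.card) := by
    intro S
    have hAm : MeasurableSet (⋂ i ∈ S, A i) :=
      MeasurableSet.biInter S.countable_toSet fun i _ => hA_meas i
    rw [hP'_def, Measure.prod_apply hAm]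
    have hsec : ∀ ω : Ω, νu (Prod.mk ω ⁻¹' ⋂ i ∈ S, A i) =
        ∏ i ∈ S, ENNReal.ofReal (q i ω) := by
      intro ω
      have hpre : Prod.mk ω ⁻¹' ⋂ i ∈ S, A i =
          ⋂ i ∈ S, {u : ULift.{v} (Fin d → ℝ) | ω ∈ B i ∧ u.down i ≤ r i ω} := by
        rw [Set.preimage_iInter₂]; rfl
      rw [hpre]
      by_cases hω : ∀ i ∈ S, ω ∈ B i
      · have hTmeas : ∀ i : Fin d, MeasurableSet
            {u : ULift.{v} (Fin d → ℝ) | ω ∈ B i ∧ u.down i ≤ r i ω} := by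
          intro i
          by_cases hωi : ω ∈ B (i : ℕ)
          · have he : {u : ULift.{v} (Fin d → ℝ) | ω ∈ B i ∧ u.down i ≤ r i ω}
                = {u : ULift.{v} (Fin d → ℝ) | u.down i ≤ r i ω} := by
              ext u; simp [hωi]
            rw [he]
            exact measurableSet_le (measurable_down.eval) measurable_const
          · have he : {u : ULift.{v} (Fin d → ℝ) | ω ∈ B i ∧ u.down i ≤ r i ω} = ∅ := by
              ext u; simp [hωi]
            rw [he]; exact MeasurableSet.empty
        have hTm : MeasurableSet (⋂ i ∈ S,
            {u : ULift.{v} (Fin d → ℝ) | ω ∈ B i ∧ u.down i ≤ r i ω}) :=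
          MeasurableSet.biInter S.countable_toSet fun i _ => hTmeas i
        rw [hνu_def, Measure.map_apply measurable_up hTm]
        have heqset : ((ULift.up : (Fin d → ℝ) → ULift.{v} (Fin d → ℝ)) ⁻¹' ⋂ i ∈ S,
            {u : ULift.{v} (Fin d → ℝ) | ω ∈ B i ∧ u.down i ≤ r i ω}) =
            Set.univ.pi (fun i : Fin d => if i ∈ S then Set.Iic (r i ω) else Set.univ) := by
          ext w
          simp only [Set.mem_preimage, Set.mem_iInter, Set.mem_setOf_eq, Set.mem_pi,
            Set.mem_univ, forall_true_left]
          constructor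
          · intro hw i
            by_cases hi : i ∈ S
            · simp only [if_pos hi]
              exact (hw i hi).2
            · simp [if_neg hi]
          · intro hw i hi
            refine ⟨hω i hi, ?_⟩
            have hwi := hw i
            rwa [if_pos hi] at hwi
        rw [heqset, hν_def, Measure.pi_pi]
        have hfac : ∀ i : Fin d,
            ν0 (if i ∈ S then Set.Iic (r i ω) else Set.univ)
              = if i ∈ S then ENNReal.ofReal (q i ω) else 1 := by
          intro i
          by_cases hi : i ∈ S
          · rw [if_pos hi, if_pos hi, hν0Iic _ (hr_pos i ω) (hr_le1 i ω)]
            congr 1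
            simp [hq_def, Set.indicator_of_mem (hω i hi)]
          · rw [if_neg hi, if_neg hi, measure_univ]
        calc (∏ i : Fin d, ν0 (if i ∈ S then Set.Iic (r i ω) else Set.univ))
            = ∏ i : Fin d, (if i ∈ S then ENNReal.ofReal (q i ω) else 1) :=
              Finset.prod_congr rfl fun i _ => hfac i
          _ = ∏ i ∈ Finset.univ ∩ S, ENNReal.ofReal (q i ω) :=
              Finset.prod_ite_mem Finset.univ S _
          _ = ∏ i ∈ S, ENNReal.ofReal (q i ω) := by rw [Finset.univ_inter]
      · push_neg at hω
        obtain ⟨i₀, hi₀S, hi₀⟩ := hω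
        have hsub : (⋂ i ∈ S, {u : ULift.{v} (Fin d → ℝ) | ω ∈ B i ∧ u.down i ≤ r i ω}) = ∅ := by
          apply Set.eq_empty_of_subset_empty
          intro u hu
          exact hi₀ ((Set.mem_iInter₂.1 hu i₀ hi₀S).1)
        rw [hsub, measure_empty]
        have : q i₀ ω = 0 := by
          simp [hq_def, Set.indicator_of_notMem hi₀]
        exact (Finset.prod_eq_zero hi₀S (by simp [this])).symm
    rw [lintegral_congr hsec]
    have hprod : ∀ ω, (∏ i ∈ S, ENNReal.ofReal (q i ω)) =
        ENNReal.ofReal (∏ i ∈ S, q i ω) :=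
      fun ω => (ENNReal.ofReal_prod_of_nonneg (s := S) (f := fun i => q i ω)
        fun i _ => hq_nonneg i ω).symm
    rw [lintegral_congr hprod]
    have hintf : Integrable (fun ω => ∏ i ∈ S, q i ω) P := by
      refine hint _ (Finset.stronglyMeasurable_fun_prod _ fun i _ => hq_measm i) ?_
      intro ω
      have hnn : (0:ℝ) ≤ ∏ i ∈ S, q i ω :=
        Finset.prod_nonneg (s := S) (f := fun i : Fin d => q i ω) fun i _ => hq_nonneg i ω
      rw [Real.norm_eq_abs, abs_of_nonneg hnn]
      exact Finset.prod_le_one (fun i _ => hq_nonneg i ω) (fun i _ => hq_le1 i ω)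
    rw [← ofReal_integral_eq_lintegral_ofReal hintf
      (ae_of_all _ fun ω => Finset.prod_nonneg fun i _ => hq_nonneg i ω)]
    congr 1
    have himg : ∀ ω, (∏ i ∈ S, q i ω) = ∏ j ∈ S.image Fin.val, q j ω := by
      intro ω
      rw [Finset.prod_image]
      intro a _ b _ hab
      exact Fin.val_injective hab
    calc ∫ ω, ∏ i ∈ S, q i ω ∂P = ∫ ω, ∏ j ∈ S.image Fin.val, q j ω ∂P := by
          exact integral_congr_ae (ae_of_all _ himg)
      _ = ε ^ (S.image Fin.val).card := by
          refine key2 d le_rfl _ ?_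
          intro j hj
          obtain ⟨i, _, rfl⟩ := Finset.mem_image.1 hj
          exact i.isLt
      _ = ε ^ S.card := by rw [Finset.card_image_of_injective _ Fin.val_injective]
  have hsingle : ∀ i : Fin d, P' (A i) = ENNReal.ofReal ε := by
    intro i
    have := key3 {i}
    simpa using this
  have hIndepSet : iIndepSet A P' := by
    rw [iIndepSet_iff_meas_biInter hA_meas]
    intro S
    rw [key3 S]
    rw [Finset.prod_congr rfl fun i _ => hsingle i, Finset.prod_const,
      ← ENNReal.ofReal_pow hε0.le]
  -- construct X
  set pick : Finset α → Finset α := fun s =>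
    if hs : k ≤ s.card then (Finset.exists_subset_card_eq hs).choose else ∅ with hpick_def
  have hpick_sub : ∀ s, pick s ⊆ s := by
    intro s
    simp only [hpick_def]
    by_cases hs : k ≤ s.card
    · rw [dif_pos hs]
      exact (Finset.exists_subset_card_eq hs).choose_spec.1
    · rw [dif_neg hs]
      exact Finset.empty_subset s
  have hpick_card : ∀ s, k ≤ s.card → (pick s).card = k := by
    intro s hs
    simp only [hpick_def]
    rw [dif_pos hs]
    exact (Finset.exists_subset_card_eq hs).choose_spec.2
  set X : ℕ → Ω × ULift.{v} (Fin d → ℝ) → Finset α := fun j ω' =>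
    if hj : j - 1 < d ∧ 1 ≤ j then
      (if ω' ∈ A ⟨j - 1, hj.1⟩ then pick (Y j ω'.1) else ∅)
    else ∅ with hX_def
  -- basic properties of X
  have hX_card : ∀ j (hj : j - 1 < d ∧ 1 ≤ j) ω', ω' ∈ A ⟨j - 1, hj.1⟩ →
      (X j ω').card = k := by
    intro j hj ω' hmem
    have hYcard : k ≤ (Y j ω'.1).card := by
      have hthis : k ≤ (Y (j - 1 + 1) ω'.1).card := hmem.1
      have hj1 : j - 1 + 1 = j := by omega
      rwa [hj1] at hthis
    simp only [hX_def]
    rw [dif_pos hj, if_pos hmem]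
    exact hpick_card _ hYcard
  have hX_zero : ∀ j ω', (¬ (j - 1 < d ∧ 1 ≤ j) ∨ ∀ (hj : j - 1 < d ∧ 1 ≤ j), ω' ∉ A ⟨j - 1, hj.1⟩) →
      X j ω' = ∅ := by
    intro j ω' hcase
    simp only [hX_def]
    by_cases hj : j - 1 < d ∧ 1 ≤ j
    · rw [dif_pos hj, if_neg]
      rcases hcase with hc | hc
      · exact absurd hj hc
      · exact hc hj
    · rw [dif_neg hj]
  refine ⟨Ω × ULift.{v} (Fin d → ℝ), inferInstance, P', Prod.fst, X, inferInstance, ?_, ?_, ?_, ?_⟩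
  · -- measure preserving
    refine ⟨measurable_fst, ?_⟩
    rw [hP'_def, Measure.map_fst_prod]
    simp
  · -- subset and cardinality
    intro i hi1 hid ω'
    constructor
    · simp only [hX_def]
      by_cases hj : i - 1 < d ∧ 1 ≤ i
      · rw [dif_pos hj]
        by_cases hmem : ω' ∈ A ⟨i - 1, hj.1⟩
        · rw [if_pos hmem]; exact hpick_sub _
        · rw [if_neg hmem]; exact Finset.empty_subset _
      · rw [dif_neg hj]; exact Finset.empty_subset _
    · have hj : i - 1 < d ∧ 1 ≤ i := ⟨by omega, hi1⟩
      by_cases hmem : ω' ∈ A ⟨i - 1, hj.1⟩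
      · right; exact hX_card i hj ω' hmem
      · left
        have : X i ω' = ∅ := by
          apply hX_zero
          right
          intro hj'
          exact hmem
        rw [this, Finset.card_empty]
  · -- independence
    have hXeq : (fun (i : Fin d) (ω' : Ω × ULift.{v} (Fin d → ℝ)) => (X ((i : ℕ) + 1) ω').card)
        = fun i => (fun n : ℕ => k * n) ∘ ((A i).indicator fun _ => (1 : ℕ)) := by
      funext i ω'
      have hj : ((i : ℕ) + 1) - 1 < d ∧ 1 ≤ (i : ℕ) + 1 := ⟨by simp, le_add_self⟩
      have hfin : (⟨((i : ℕ) + 1) - 1, hj.1⟩ : Fin d) = i := by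
        apply Fin.ext
        simp
      by_cases hmem : ω' ∈ A i
      · have : (X ((i : ℕ) + 1) ω').card = k := by
          apply hX_card _ hj
          rw [hfin]
          exact hmem
        simp [this, Function.comp, Set.indicator_of_mem hmem]
      · have : X ((i : ℕ) + 1) ω' = ∅ := by
          apply hX_zero
          right
          intro hj'
          have : (⟨((i : ℕ) + 1) - 1, hj'.1⟩ : Fin d) = i := by
            apply Fin.ext; simp
          rw [this]
          exact hmem
        simp [this, Function.comp, Set.indicator_of_notMem hmem]
    rw [hXeq]
    exact (hIndepSet.iIndepFun_indicator).comp _ fun i => measurable_from_top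
  · -- marginals
    intro i hi1 hid
    have hj : i - 1 < d ∧ 1 ≤ i := ⟨by omega, hi1⟩
    have hkset : {ω' | (X i ω').card = k} = A ⟨i - 1, hj.1⟩ := by
      ext ω'
      simp only [Set.mem_setOf_eq]
      constructor
      · intro hcard
        by_contra hmem
        have : X i ω' = ∅ := by
          apply hX_zero; right; intro hj'; exact hmem
        rw [this, Finset.card_empty] at hcard
        omega
      · intro hmem
        exact hX_card i hj ω' hmem
    have h0set : {ω' | (X i ω').card = 0} = (A ⟨i - 1, hj.1⟩)ᶜ := by
      ext ω'
      simp only [Set.mem_setOf_eq, Set.mem_compl_iff]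
      constructor
      · intro hcard hmem
        have := hX_card i hj ω' hmem
        omega
      · intro hmem
        have : X i ω' = ∅ := by
          apply hX_zero; right; intro hj'; exact hmem
        rw [this, Finset.card_empty]
    constructor
    · rw [hkset]; exact hsingle _
    · rw [h0set, measure_compl (hA_meas _) (measure_ne_top _ _), hsingle _, measure_univ]
      rw [ENNReal.ofReal_sub _ hε0.le]
      simp
end

section
/- Let 0 < γ < 1 and β < \tildeβ. There exists n_0 ∈ ℕ such that for all n_0 ≤ m < r: 1 - exp(-\tildeπ((-Σ_{k=m}^{r} 1/k, -Σ_{k=m+1}^{r} 1/k])) ≥ β m^{-γ} r^{γ-1}, where \tildeπ(dx) = \tildeβ(e^{γx}1_{x>0}+e^{(1-γ)x}1_{x<0})dx. -/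
open Real MeasureTheory Finset

set_option maxHeartbeats 1000000

private lemma one_div_le_log_sub (a : ℝ) (ha : 0 < a) :
    1 / (a + 1) ≤ Real.log (a + 1) - Real.log a := by
  have h1 : (0:ℝ) < a + 1 := by linarith
  have h2 : Real.log (a / (a + 1)) ≤ a / (a + 1) - 1 :=
    Real.log_le_sub_one_of_pos (by positivity)
  rw [Real.log_div (ne_of_gt ha) (ne_of_gt h1)] at h2
  have h3 : a / (a + 1) - 1 = -(1 / (a + 1)) := by field_simp; ring
  rw [h3] at h2
  linarith

private lemma sum_inv_le_log (m : ℕ) (hm : 1 ≤ m) (r : ℕ) (hr : m ≤ r) :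
    ∑ k ∈ Icc (m + 1) r, (1 : ℝ) / k ≤ Real.log r - Real.log m := by
  induction r, hr using Nat.le_induction with
  | base =>
      rw [Finset.Icc_eq_empty (by omega)]
      simp
  | succ r hr ih =>
      rw [Finset.sum_Icc_succ_top (by omega : m + 1 ≤ r + 1)]
      have hr0 : (0:ℝ) < r := by
        have h1 : 1 ≤ r := le_trans hm hr
        exact_mod_cast Nat.lt_of_lt_of_le Nat.zero_lt_one h1
      have hlog := one_div_le_log_sub r hr0
      push_cast
      linarith

/-- Lower coupling inequality: for `0 < γ < 1` and `β < β̃` there exists `n₀` such that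
for all `n₀ ≤ m < r`,
`1 - exp(-π̃((-Σ_{k=m}^r 1/k, -Σ_{k=m+1}^r 1/k])) ≥ β m^{-γ} r^{γ-1}`, where
`π̃(dx) = β̃(e^{γx}1_{x>0} + e^{(1-γ)x}1_{x<0})dx`. -/
theorem interval_mass_lower_bound (γ β tβ : ℝ) (hγ0 : 0 < γ) (hγ1 : γ < 1)
    (hβ0 : 0 < β) (hβ : β < tβ) :
    ∃ n₀ : ℕ, ∀ m r : ℕ, n₀ ≤ m → m < r →
      β * (m : ℝ) ^ (-γ) * (r : ℝ) ^ (γ - 1)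
        ≤ 1 - Real.exp (-(∫ x in Set.Ioc (-(∑ k ∈ Icc m r, (1 : ℝ) / k))
              (-(∑ k ∈ Icc (m + 1) r, (1 : ℝ) / k)),
            tβ * ((if 0 < x then Real.exp (γ * x) else 0)
              + (if x < 0 then Real.exp ((1 - γ) * x) else 0)))) := by
  have htβ0 : 0 < tβ := lt_trans hβ0 hβ
  set β' : ℝ := (β + tβ) / 2 with hβ'def
  have hβ'1 : β < β' := by rw [hβ'def]; linarith
  have hβ'2 : β' < tβ := by rw [hβ'def]; linarith
  have hβ'0 : 0 < β' := lt_trans hβ0 hβ'1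
  -- choose n₀
  obtain ⟨n₀, hn₀⟩ := exists_nat_ge (max (tβ / (tβ - β')) (tβ * β / (β' - β)) + 1)
  refine ⟨n₀, fun m r hm hmr => ?_⟩
  have hmn : (max (tβ / (tβ - β')) (tβ * β / (β' - β)) + 1) ≤ (m : ℝ) :=
    le_trans hn₀ (by exact_mod_cast hm)
  have hm1 : (1 : ℝ) ≤ (m : ℝ) := by
    have h1 : (0:ℝ) ≤ tβ / (tβ - β') := by
      apply div_nonneg (le_of_lt htβ0); linarith
    have h2 := le_max_left (tβ / (tβ - β')) (tβ * β / (β' - β))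
    linarith
  have hmnat1 : 1 ≤ m := by exact_mod_cast hm1
  have hm0 : (0 : ℝ) < (m : ℝ) := lt_of_lt_of_le one_pos hm1
  have hr0 : (0 : ℝ) < (r : ℝ) := lt_of_lt_of_le hm0 (by exact_mod_cast le_of_lt hmr)
  have hmr' : (m : ℝ) ≤ (r : ℝ) := by exact_mod_cast le_of_lt hmr
  -- condition A : (1-γ) * tβ ≤ (tβ - β') * m
  have hcondA : (1 - γ) * tβ ≤ (tβ - β') * (m : ℝ) := by
    have h1 : tβ / (tβ - β') ≤ (m : ℝ) := by
      have h2 := le_max_left (tβ / (tβ - β')) (tβ * β / (β' - β))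
      linarith
    rw [div_le_iff₀ (by linarith : (0:ℝ) < tβ - β')] at h1
    have h3 : (1 - γ) * tβ ≤ 1 * tβ :=
      mul_le_mul_of_nonneg_right (by linarith) (le_of_lt htβ0)
    have h4 : (m : ℝ) * (tβ - β') = (tβ - β') * (m : ℝ) := by ring
    linarith
  -- condition B : tβ * β ≤ (β' - β) * m
  have hcondB : tβ * β ≤ (β' - β) * (m : ℝ) := by
    have h1 : tβ * β / (β' - β) ≤ (m : ℝ) := by
      have h2 := le_max_right (tβ / (tβ - β')) (tβ * β / (β' - β))
      linarith
    rw [div_le_iff₀ (by linarith : (0:ℝ) < β' - β)] at h1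
    linarith
  -- sums
  set S : ℝ := ∑ k ∈ Icc (m + 1) r, (1 : ℝ) / k with hSdef
  have hS0 : 0 < S := by
    rw [hSdef]
    apply Finset.sum_pos
    · intro k hk
      simp only [Finset.mem_Icc] at hk
      have hk0 : 0 < k := by omega
      have hk0' : (0:ℝ) < (k:ℝ) := by exact_mod_cast hk0
      positivity
    · exact ⟨r, by simp [Finset.mem_Icc]; omega⟩
  have hsum_split : ∑ k ∈ Icc m r, (1 : ℝ) / k = 1 / m + S := by
    rw [hSdef, Finset.Icc_add_one_left_eq_Ioc, Finset.Icc_eq_cons_Ioc (le_of_lt hmr), Finset.sum_cons]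
  set a : ℝ := -(∑ k ∈ Icc m r, (1 : ℝ) / k) with hadef
  set b : ℝ := -S with hbdef
  have hab : a = b - 1 / m := by rw [hadef, hbdef, hsum_split]; ring
  have hb0 : b < 0 := by rw [hbdef]; linarith
  have hab' : a < b := by
    have h1 : (0:ℝ) < 1 / m := by positivity
    rw [hab]; linarith
  -- rewrite the integral
  have hcongr : ∫ x in Set.Ioc a b,
      tβ * ((if 0 < x then Real.exp (γ * x) else 0)
        + (if x < 0 then Real.exp ((1 - γ) * x) else 0))
      = ∫ x in Set.Ioc a b, tβ * Real.exp ((1 - γ) * x) := by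
    apply setIntegral_congr_fun measurableSet_Ioc
    intro x hx
    have hx0 : x < 0 := lt_of_le_of_lt hx.2 hb0
    simp [hx0, not_lt.mpr (le_of_lt hx0)]
  rw [hcongr]
  set I : ℝ := ∫ x in Set.Ioc a b, tβ * Real.exp ((1 - γ) * x) with hIdef
  have hvol : (volume (Set.Ioc a b)).toReal = 1 / m := by
    rw [Real.volume_Ioc, ENNReal.toReal_ofReal (by linarith)]
    rw [hab]; ring
  have hint : IntegrableOn (fun x => tβ * Real.exp ((1 - γ) * x)) (Set.Ioc a b) volume :=
    (Continuous.mul continuous_const (Real.continuous_exp.comp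
      (continuous_const.mul continuous_id))).integrableOn_Ioc
  -- lower bound on I
  have hIlow : tβ * Real.exp ((1 - γ) * a) * (1 / m) ≤ I := by
    have h1 := setIntegral_ge_of_const_le (c := tβ * Real.exp ((1 - γ) * a))
      measurableSet_Ioc (by rw [Real.volume_Ioc]; exact ENNReal.ofReal_ne_top)
      (fun x hx => by
        have h2 : (1 - γ) * a ≤ (1 - γ) * x :=
          mul_le_mul_of_nonneg_left (le_of_lt hx.1) (by linarith)
        exact mul_le_mul_of_nonneg_left (Real.exp_le_exp.mpr h2) (le_of_lt htβ0))
      hint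
    rw [measureReal_def, hvol, smul_eq_mul] at h1
    linarith
  -- upper bound on I
  have hIhigh : I ≤ tβ / m := by
    have hb := norm_setIntegral_le_of_norm_le_const (C := tβ) (μ := volume)
      (s := Set.Ioc a b) (f := fun x => tβ * Real.exp ((1 - γ) * x))
      (by rw [Real.volume_Ioc]; exact ENNReal.ofReal_lt_top)
      (fun x hx => by
        have hx0 : x < 0 := lt_of_le_of_lt hx.2 hb0
        have h1 : Real.exp ((1 - γ) * x) ≤ 1 := by
          rw [Real.exp_le_one_iff]
          exact mul_nonpos_of_nonneg_of_nonpos (by linarith) (le_of_lt hx0)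
        rw [Real.norm_eq_abs, abs_of_nonneg (by positivity)]
        calc tβ * Real.exp ((1 - γ) * x) ≤ tβ * 1 :=
              mul_le_mul_of_nonneg_left h1 (le_of_lt htβ0)
          _ = tβ := by ring)
    rw [measureReal_def, hvol] at hb
    calc I ≤ ‖I‖ := le_abs_self I
    _ ≤ tβ * (1 / m) := hb
    _ = tβ / m := by ring
  have hI0 : 0 < I :=
    lt_of_lt_of_le (by positivity : (0:ℝ) < tβ * Real.exp ((1 - γ) * a) * (1 / m)) hIlow
  -- key analytic lower bound
  have hSle : S ≤ Real.log r - Real.log m := sum_inv_le_log m hmnat1 r (le_of_lt hmr)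
  have hexpA : β' / tβ ≤ Real.exp (-((1 - γ) / m)) := by
    have h1 : 1 - (1 - γ) / m ≤ Real.exp (-((1 - γ) / m)) := by
      have h2 := Real.add_one_le_exp (-((1 - γ) / m)); linarith
    have h3 : (1 - γ) * tβ / (m : ℝ) ≤ tβ - β' := by
      rw [div_le_iff₀ hm0]; linarith
    have h2 : β' / tβ ≤ 1 - (1 - γ) / m := by
      rw [div_le_iff₀ htβ0]
      have h4 : (1 - (1 - γ) / m) * tβ = tβ - (1 - γ) * tβ / m := by ring
      linarith
    linarith
  set E1 : ℝ := Real.exp (-((1 - γ) / m)) with hE1def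
  set E2 : ℝ := Real.exp (-((1 - γ) * S)) with hE2def
  have hE1pos : 0 < E1 := Real.exp_pos _
  have hE2pos : 0 < E2 := Real.exp_pos _
  have hexpS : (m : ℝ) ^ (1 - γ) * (r : ℝ) ^ (γ - 1) ≤ E2 := by
    have h1 : (1 - γ) * Real.log m + (γ - 1) * Real.log r ≤ -((1 - γ) * S) := by
      nlinarith [hSle]
    calc (m : ℝ) ^ (1 - γ) * (r : ℝ) ^ (γ - 1)
        = Real.exp ((1 - γ) * Real.log m + (γ - 1) * Real.log r) := by
          rw [Real.exp_add, Real.rpow_def_of_pos hm0, Real.rpow_def_of_pos hr0,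
            mul_comm (Real.log (m:ℝ)), mul_comm (Real.log (r:ℝ))]
      _ ≤ E2 := Real.exp_le_exp.mpr h1
  have hsplit : Real.exp ((1 - γ) * a) = E1 * E2 := by
    rw [hE1def, hE2def, ← Real.exp_add]
    congr 1
    rw [hab, hbdef]; ring
  have hmneg : (m : ℝ) ^ (-γ) = (m : ℝ) ^ (1 - γ) * (1 / m) := by
    rw [show -γ = (1 - γ) + (-1) by ring, Real.rpow_add hm0, Real.rpow_neg_one, one_div]
  have hrp : (0:ℝ) < (r : ℝ) ^ (γ - 1) := Real.rpow_pos_of_pos hr0 _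
  have hmp : (0:ℝ) < (m : ℝ) ^ (1 - γ) := Real.rpow_pos_of_pos hm0 _
  have hkey : β' * ((m : ℝ) ^ (-γ) * (r : ℝ) ^ (γ - 1)) ≤ I := by
    have h1 : β' ≤ tβ * E1 := by
      rw [div_le_iff₀ htβ0] at hexpA; linarith
    have h2 : β' * ((m : ℝ) ^ (1 - γ) * (r : ℝ) ^ (γ - 1)) ≤ (tβ * E1) * E2 :=
      mul_le_mul h1 hexpS (by positivity) (by positivity)
    have h5 : (0:ℝ) ≤ 1 / m := by positivity
    calc β' * ((m : ℝ) ^ (-γ) * (r : ℝ) ^ (γ - 1))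
        = β' * ((m : ℝ) ^ (1 - γ) * (r : ℝ) ^ (γ - 1)) * (1 / m) := by
          rw [hmneg]; ring
      _ ≤ (tβ * E1) * E2 * (1 / m) := mul_le_mul_of_nonneg_right h2 h5
      _ = tβ * Real.exp ((1 - γ) * a) * (1 / m) := by rw [hsplit]; ring
      _ ≤ I := hIlow
  -- conclude
  set P : ℝ := (m : ℝ) ^ (-γ) * (r : ℝ) ^ (γ - 1) with hPdef
  have hP0 : 0 < P := by rw [hPdef, hmneg]; positivity
  have hβI : β * I ≤ β' - β := by
    have h1 : β * I ≤ β * (tβ / m) := mul_le_mul_of_nonneg_left hIhigh (le_of_lt hβ0)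
    have h2 : β * (tβ / m) ≤ β' - β := by
      rw [mul_div_assoc'] at h1 ⊢
      rw [div_le_iff₀ hm0]
      linarith
    linarith
  have hexpI : Real.exp (-I) ≤ 1 / (1 + I) := by
    have h1 := Real.add_one_le_exp I
    rw [Real.exp_neg, one_div]
    exact inv_anti₀ (by linarith) (by linarith)
  have h5 : β * P * (1 + I) ≤ I := by
    have hPI := mul_le_mul_of_nonneg_right hβI (le_of_lt hP0)
    calc β * P * (1 + I) = β * P + β * I * P := by ring
      _ ≤ β * P + (β' - β) * P := by linarith
      _ = β' * P := by ring
      _ ≤ I := hkey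
  have h6 : β * P ≤ 1 - 1 / (1 + I) := by
    have h7 : 1 - 1 / (1 + I) = I / (1 + I) := by
      field_simp; ring
    rw [h7, le_div_iff₀ (by linarith : (0:ℝ) < 1 + I)]
    exact h5
  calc β * (m : ℝ) ^ (-γ) * (r : ℝ) ^ (γ - 1) = β * P := by rw [hPdef]; ring
    _ ≤ 1 - 1 / (1 + I) := h6
    _ ≤ 1 - Real.exp (-I) := by linarith
end

section
/- Let 0 < γ < 1 and \tildeβ < β. There exists a constant C > 0 and for each u ∈ (0,1) an m(u) such that for all m ≥ m(u) and all bum ≤ s < r ≤ m: 1 - exp(-\tildeπ((-Σ_{k=s}^{r-1} 1/k, -Σ_{k=s+1}^{r-1} 1/k])) ≤ β s^{-γ} r^{γ-1}, where \tildeπ(dx) = \tildeβ(e^{γx}1_{x>0}+e^{(1-γ)x}1_{x<0})dx and 0 < b < 1 is fixed. -/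
open Real MeasureTheory Finset

private lemma harm_lower (a : ℕ) (ha : 1 ≤ a) :
    ∀ n, a ≤ n → Real.log n - Real.log a ≤ ∑ k ∈ Finset.Ico a n, (1 : ℝ) / k := by
  intro n hn
  induction n, hn using Nat.le_induction with
  | base => simp
  | succ n hn ih =>
    have hn0 : (0 : ℝ) < n := by exact_mod_cast lt_of_lt_of_le ha hn
    have h1 : Real.log (n + 1) - Real.log n ≤ 1 / n := by
      have : Real.log ((n + 1) / n) ≤ (n + 1) / n - 1 :=
        Real.log_le_sub_one_of_pos (by positivity)
      rw [Real.log_div (by positivity) (ne_of_gt hn0)] at this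
      have : ((n : ℝ) + 1) / n - 1 = 1 / n := by field_simp; ring
      linarith [Real.log_le_sub_one_of_pos (show (0:ℝ) < ((n:ℝ)+1)/n by positivity),
        Real.log_div (show ((n:ℝ)+1) ≠ 0 by positivity) (ne_of_gt hn0), this]
    rw [Finset.sum_Ico_succ_top hn]
    push_cast
    push_cast at ih h1
    linarith

/-- Upper coupling inequality: for `0 < γ < 1`, `β̃ < β` and fixed `0 < b < 1`, for each
`u ∈ (0,1)` there is `m(u)` such that for all `m ≥ m(u)` and all `bum ≤ s < r ≤ m`,
`1 - exp(-π̃((-Σ_{k=s}^{r-1} 1/k, -Σ_{k=s+1}^{r-1} 1/k])) ≤ β s^{-γ} r^{γ-1}`, where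
`π̃(dx) = β̃(e^{γx}1_{x>0} + e^{(1-γ)x}1_{x<0})dx`. -/
theorem interval_mass_upper_bound (γ β tβ b : ℝ) (hγ0 : 0 < γ) (hγ1 : γ < 1)
    (htβ : 0 < tβ) (hβ : tβ < β) (hb0 : 0 < b) (hb1 : b < 1) :
    ∀ u : ℝ, 0 < u → u < 1 → ∃ M : ℕ, ∀ m s r : ℕ, M ≤ m →
      b * u * m ≤ (s : ℝ) → s < r → r ≤ m →
      1 - Real.exp (-(∫ x in Set.Ioc (-(∑ k ∈ Icc s (r - 1), (1 : ℝ) / k))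
              (-(∑ k ∈ Icc (s + 1) (r - 1), (1 : ℝ) / k)),
            tβ * ((if 0 < x then Real.exp (γ * x) else 0)
              + (if x < 0 then Real.exp ((1 - γ) * x) else 0))))
        ≤ β * (s : ℝ) ^ (-γ) * (r : ℝ) ^ (γ - 1) := by
  intro u hu0 hu1
  have hbu : 0 < b * u := mul_pos hb0 hu0
  set c : ℝ := max (tβ / (β - tβ)) 1 with hc
  refine ⟨⌈c / (b * u)⌉₊ + 1, ?_⟩
  intro m s r hM hs hsr hrm
  have hcs : c ≤ (s : ℝ) := by
    have h1 : c / (b * u) ≤ (⌈c / (b * u)⌉₊ : ℝ) := Nat.le_ceil _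
    have h2 : ((⌈c / (b * u)⌉₊ : ℕ) : ℝ) ≤ (m : ℝ) := by
      exact_mod_cast le_trans (Nat.le_succ _) hM
    calc c = (b * u) * (c / (b * u)) := by field_simp
      _ ≤ (b * u) * m := by gcongr; exact h1.trans h2
      _ ≤ s := hs
  have hs1 : (1 : ℝ) ≤ (s : ℝ) := le_trans (le_max_right _ _) hcs
  have hS : (0 : ℝ) < s := lt_of_lt_of_le one_pos hs1
  have hsr' : s + 1 ≤ r := hsr
  have hr0 : (0 : ℝ) < r := by
    have : (s : ℝ) < r := by exact_mod_cast hsr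
    linarith
  set A : ℝ := ∑ k ∈ Icc s (r - 1), (1 : ℝ) / k with hA
  set B : ℝ := ∑ k ∈ Icc (s + 1) (r - 1), (1 : ℝ) / k with hB
  have hsr1 : s ≤ r - 1 := by omega
  have hAB : A = 1 / s + B := by
    rw [hA, Finset.Icc_eq_cons_Ioc hsr1, Finset.sum_cons, ← Finset.Icc_add_one_left_eq_Ioc]
  have hB0 : 0 ≤ B := Finset.sum_nonneg fun k _ => by positivity
  have hBlog : Real.log r - Real.log (s + 1) ≤ B := by
    have he : Icc (s + 1) (r - 1) = Finset.Ico (s + 1) r := by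
      rw [← Finset.Ico_add_one_right_eq_Icc]; congr 1; omega
    rw [hB, he]
    have := harm_lower (s + 1) (by omega) r hsr'
    push_cast at this ⊢
    linarith
  have hd : (0 : ℝ) < 1 - γ := by linarith
  set f : ℝ → ℝ := fun x => tβ * ((if 0 < x then Real.exp (γ * x) else 0)
      + (if x < 0 then Real.exp ((1 - γ) * x) else 0)) with hf
  set g : ℝ → ℝ := fun x => tβ * Real.exp ((1 - γ) * x) with hg
  have hneg : -A ≤ -B := by
    rw [hAB]
    have h0s : 0 < 1 / (s:ℝ) := by positivity
    linarith
  have hBneg : -B ≤ 0 := by linarith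
  -- pointwise bound on the interval
  have hfg : ∀ x ∈ Set.Ioc (-A) (-B), f x ≤ g x := by
    intro x hx
    have hx0 : x ≤ 0 := le_trans hx.2 hBneg
    simp only [hf, hg]
    have h1 : (if 0 < x then Real.exp (γ * x) else 0) = 0 := by
      rw [if_neg (not_lt.mpr hx0)]
    rw [h1, zero_add]
    gcongr
    split_ifs
    · exact le_refl _
    · positivity
  have hf0 : ∀ x, 0 ≤ f x := by
    intro x
    simp only [hf]
    apply mul_nonneg htβ.le
    apply add_nonneg <;> split_ifs <;> positivity
  have hfm : Measurable f := by
    have hm1 : Measurable fun x : ℝ => if 0 < x then Real.exp (γ * x) else 0 :=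
      Measurable.ite measurableSet_Ioi
        (Real.measurable_exp.comp (measurable_const.mul measurable_id)) measurable_const
    have hm2 : Measurable fun x : ℝ => if x < 0 then Real.exp ((1 - γ) * x) else 0 :=
      Measurable.ite measurableSet_Iio
        (Real.measurable_exp.comp (measurable_const.mul measurable_id)) measurable_const
    exact (hm1.add hm2).const_mul tβ
  have hgi : IntegrableOn g (Set.Ioc (-A) (-B)) := by
    apply Continuous.integrableOn_Ioc
    exact continuous_const.mul (Real.continuous_exp.comp (continuous_const.mul continuous_id))
  have hfi : IntegrableOn f (Set.Ioc (-A) (-B)) := by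
    refine Integrable.mono hgi hfm.aestronglyMeasurable.restrict ?_
    rw [ae_restrict_iff' measurableSet_Ioc]
    filter_upwards with x hx
    rw [Real.norm_of_nonneg (hf0 x), Real.norm_of_nonneg (by positivity : 0 ≤ g x)]
    exact hfg x hx
  have hIJ : (∫ x in Set.Ioc (-A) (-B), f x) ≤ ∫ x in Set.Ioc (-A) (-B), g x :=
    setIntegral_mono_on hfi hgi measurableSet_Ioc hfg
  -- compute the integral of g
  have hJval : (∫ x in Set.Ioc (-A) (-B), g x)
      = tβ * ((1 - γ)⁻¹ * (Real.exp ((1 - γ) * (-B)) - Real.exp ((1 - γ) * (-A)))) := by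
    rw [← intervalIntegral.integral_of_le hneg]
    rw [intervalIntegral.integral_const_mul]
    rw [intervalIntegral.integral_comp_mul_left Real.exp (ne_of_gt hd)]
    rw [integral_exp]
    simp [smul_eq_mul]
  -- bound on J
  have hexpA : Real.exp ((1 - γ) * (-A))
      = Real.exp ((1 - γ) * (-B)) * Real.exp (-((1 - γ) / s)) := by
    rw [← Real.exp_add, hAB]; ring_nf
  have h1e : 1 - Real.exp (-((1 - γ) / s)) ≤ (1 - γ) / s := by
    have := Real.add_one_le_exp (-((1 - γ) / s)); linarith
  have hJ2 : (∫ x in Set.Ioc (-A) (-B), g x) ≤ tβ / s * Real.exp ((1 - γ) * (-B)) := by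
    rw [hJval, hexpA]
    have hEB : (0 : ℝ) < Real.exp ((1 - γ) * (-B)) := Real.exp_pos _
    have : Real.exp ((1-γ) * (-B)) - Real.exp ((1-γ) * (-B)) * Real.exp (-((1-γ)/s))
        = Real.exp ((1-γ) * (-B)) * (1 - Real.exp (-((1-γ)/s))) := by ring
    rw [this]
    have h2 : Real.exp ((1-γ) * (-B)) * (1 - Real.exp (-((1-γ)/s)))
        ≤ Real.exp ((1-γ) * (-B)) * ((1 - γ) / s) := by
      apply mul_le_mul_of_nonneg_left h1e hEB.le
    calc tβ * ((1 - γ)⁻¹ * (Real.exp ((1-γ) * (-B)) * (1 - Real.exp (-((1-γ)/s)))))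
        ≤ tβ * ((1 - γ)⁻¹ * (Real.exp ((1-γ) * (-B)) * ((1 - γ) / s))) := by
          have h4 := mul_le_mul_of_nonneg_left h2 (by positivity : (0:ℝ) ≤ (1 - γ)⁻¹)
          exact mul_le_mul_of_nonneg_left h4 htβ.le
      _ = tβ / s * Real.exp ((1 - γ) * (-B)) := by field_simp
  -- bound exp(-(1-γ)B) by rpow
  have hexpB : Real.exp ((1 - γ) * (-B)) ≤ ((s : ℝ) + 1) ^ (1 - γ) * (r : ℝ) ^ (γ - 1) := by
    have hkey : (1 - γ) * (-B) ≤ (1 - γ) * (Real.log (s + 1) - Real.log r) := by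
      have : Real.log r - Real.log (s + 1) ≤ B := hBlog
      nlinarith
    calc Real.exp ((1 - γ) * (-B)) ≤ Real.exp ((1 - γ) * (Real.log (s+1) - Real.log r)) :=
          Real.exp_le_exp.mpr hkey
      _ = ((s : ℝ) + 1) ^ (1 - γ) * (r : ℝ) ^ (γ - 1) := by
          rw [Real.rpow_def_of_pos (by positivity), Real.rpow_def_of_pos hr0, ← Real.exp_add]
          congr 1; ring
  -- final algebraic bound
  have hsp1 : ((s : ℝ) + 1) ^ (1 - γ) ≤ (s : ℝ) ^ (1 - γ) * (1 + 1 / s) := by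
    have hrw : (s : ℝ) + 1 = s * (1 + 1 / s) := by field_simp
    rw [hrw, Real.mul_rpow hS.le (by positivity)]
    refine mul_le_mul_of_nonneg_left ?_ (Real.rpow_nonneg hS.le _)
    calc (1 + 1 / (s:ℝ)) ^ (1 - γ) ≤ (1 + 1 / (s:ℝ)) ^ (1:ℝ) := by
          apply Real.rpow_le_rpow_of_exponent_le _ (by linarith)
          have : 0 < 1 / (s:ℝ) := by positivity
          linarith
      _ = 1 + 1 / s := Real.rpow_one _
  have htβs : tβ * (1 + 1 / s) ≤ β := by
    have h1 : tβ / (β - tβ) ≤ (s : ℝ) := le_trans (le_max_left _ _) hcs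
    have h2 : tβ ≤ (s : ℝ) * (β - tβ) := by
      rw [div_le_iff₀ (by linarith)] at h1; linarith
    have h3 : tβ / s ≤ β - tβ := by rw [div_le_iff₀ hS]; linarith [h2]
    have : tβ * (1 + 1 / s) = tβ + tβ / s := by ring
    linarith
  have hsneg : (s : ℝ) ^ (1 - γ) / s = (s : ℝ) ^ (-γ) := by
    rw [div_eq_iff (ne_of_gt hS)]
    have h5 : (s:ℝ) ^ (-γ) * (s:ℝ) = (s:ℝ) ^ (-γ) * (s:ℝ) ^ (1:ℝ) := by
      rw [Real.rpow_one]
    rw [h5, ← Real.rpow_add hS]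
    congr 1
    ring
  have hrg : (0 : ℝ) ≤ (r : ℝ) ^ (γ - 1) := Real.rpow_nonneg hr0.le _
  have hsg : (0 : ℝ) ≤ (s : ℝ) ^ (1 - γ) := Real.rpow_nonneg hS.le _
  -- assemble
  have hfinal : tβ / s * (((s : ℝ) + 1) ^ (1 - γ) * (r : ℝ) ^ (γ - 1))
      ≤ β * (s : ℝ) ^ (-γ) * (r : ℝ) ^ (γ - 1) := by
    have step1 : tβ / s * (((s : ℝ) + 1) ^ (1 - γ) * (r : ℝ) ^ (γ - 1))
        ≤ tβ / s * ((s : ℝ) ^ (1 - γ) * (1 + 1 / s) * (r : ℝ) ^ (γ - 1)) := by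
      gcongr
    have step2 : tβ / s * ((s : ℝ) ^ (1 - γ) * (1 + 1 / s) * (r : ℝ) ^ (γ - 1))
        = (tβ * (1 + 1 / s)) * ((s : ℝ) ^ (1 - γ) / s) * (r : ℝ) ^ (γ - 1) := by ring
    have step3 : (tβ * (1 + 1 / s)) * ((s : ℝ) ^ (1 - γ) / s) * (r : ℝ) ^ (γ - 1)
        ≤ β * (s : ℝ) ^ (-γ) * (r : ℝ) ^ (γ - 1) := by
      rw [hsneg]
      gcongr
    calc _ ≤ _ := step1
      _ = _ := step2
      _ ≤ _ := step3
  -- put it together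
  have hI : (∫ x in Set.Ioc (-A) (-B), f x) ≤ β * (s : ℝ) ^ (-γ) * (r : ℝ) ^ (γ - 1) := by
    calc (∫ x in Set.Ioc (-A) (-B), f x) ≤ ∫ x in Set.Ioc (-A) (-B), g x := hIJ
      _ ≤ tβ / s * Real.exp ((1 - γ) * (-B)) := hJ2
      _ ≤ tβ / s * (((s : ℝ) + 1) ^ (1 - γ) * (r : ℝ) ^ (γ - 1)) := by
          apply mul_le_mul_of_nonneg_left hexpB (by positivity)
      _ ≤ _ := hfinal
  have h1exp := Real.add_one_le_exp (-(∫ x in Set.Ioc (-A) (-B), f x))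
  simp only [hf] at hI h1exp
  linarith
end
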